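/- Let κ > 0 and consider the system q' = −q² − κν + Θ̃², ν' = q(1−ν), Θ̃' = −2qΘ̃ with initial data ν(0) < 1 and Θ̃(0) ≠ 0. Then the solution (q, ν, Θ̃) exists and remains bounded for all t ≥ 0. -/

import Mathlib

set_option maxHeartbeats 1000000

/-- Uniqueness for the linear ODE `y' = -2 q y` with `y 0 = 0` on `[0, ∞)`. -/
lemma lin_ode_zero (q y : ℝ → ℝ) (hqc : ContinuousOn q (Set.Ici 0))
    (hy : ∀ t ≥ (0:ℝ), HasDerivAt y (-2 * q t * y t) t) (hy0 : y 0 = 0) :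
    ∀ t ≥ (0:ℝ), y t = 0 := by
  intro b hb
  obtain ⟨K, hK⟩ := (isCompact_Icc (a := (0:ℝ)) (b := b)).exists_bound_of_continuousOn
      (hqc.mono Set.Icc_subset_Ici_self)
  have hcont : ContinuousOn y (Set.Icc 0 b) := fun t ht =>
    (hy t ht.1).continuousAt.continuousWithinAt
  have hderiv : ∀ t ∈ Set.Ico (0:ℝ) b, HasDerivWithinAt y (-2 * q t * y t) (Set.Ici t) t :=
    fun t ht => (hy t ht.1).hasDerivWithinAt
  have hbound : ∀ t ∈ Set.Ico (0:ℝ) b, ‖-2 * q t * y t‖ ≤ (2 * K) * ‖y t‖ + 0 := by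
    intro t ht
    have h1 : ‖q t‖ ≤ K := hK t ⟨ht.1, ht.2.le⟩
    have h2 : ‖-2 * q t * y t‖ = 2 * ‖q t‖ * ‖y t‖ := by
      simp [Real.norm_eq_abs, abs_mul]
    rw [h2]
    nlinarith [norm_nonneg (y t), norm_nonneg (q t)]
  have hinit : ‖y 0‖ ≤ 0 := by simp [hy0]
  have hnorm := norm_le_gronwallBound_of_norm_deriv_right_le hcont hderiv hinit hbound
      b ⟨hb, le_refl b⟩
  rw [gronwallBound_ε0] at hnorm
  simpa using hnorm

/-- Rotation prevents blowup: for `q' = −q² − κν + Θ̃²`, `ν' = q(1−ν)`, `Θ̃' = −2qΘ̃`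
with `ν(0) < 1` and `Θ̃(0) ≠ 0`, the solution remains bounded for all `t ≥ 0`. -/
theorem stmt_15 (κ : ℝ) (hκ : 0 < κ) (q ν Θ : ℝ → ℝ)
    (hq : ∀ t ≥ (0:ℝ), HasDerivAt q (-(q t)^2 - κ * ν t + (Θ t)^2) t)
    (hν : ∀ t ≥ (0:ℝ), HasDerivAt ν (q t * (1 - ν t)) t)
    (hΘ : ∀ t ≥ (0:ℝ), HasDerivAt Θ (-2 * q t * Θ t) t)
    (hν0 : ν 0 < 1) (hΘ0 : Θ 0 ≠ 0) :
    ∃ M : ℝ, ∀ t ≥ (0:ℝ), |q t| ≤ M ∧ |ν t| ≤ M ∧ |Θ t| ≤ M := by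
  have hqc : ContinuousOn q (Set.Ici 0) :=
    fun t ht => (hq t ht).continuousAt.continuousWithinAt
  -- W = (1-ν)² satisfies W' = -2qW
  have hW : ∀ t ≥ (0:ℝ), HasDerivAt (fun s => (1 - ν s)^2) (-2 * q t * (1 - ν t)^2) t := by
    intro t ht
    have h := ((hν t ht).const_sub 1).pow 2
    refine h.congr_deriv ?_
    push_cast
    ring
  -- F = q² + κν² + Θ² satisfies F' = -2qF
  have hF : ∀ t ≥ (0:ℝ), HasDerivAt (fun s => (q s)^2 + κ * (ν s)^2 + (Θ s)^2)
      (-2 * q t * ((q t)^2 + κ * (ν t)^2 + (Θ t)^2)) t := by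
    intro t ht
    have h := (((hq t ht).pow 2).add (((hν t ht).pow 2).const_mul κ)).add ((hΘ t ht).pow 2)
    refine h.congr_deriv ?_
    push_cast
    ring
  -- conserved: Θ t * (1-ν 0)² = Θ 0 * (1-ν t)²
  have key1 : ∀ t ≥ (0:ℝ), Θ t * (1 - ν 0)^2 = Θ 0 * (1 - ν t)^2 := by
    have h := lin_ode_zero q (fun s => Θ s * (1 - ν 0)^2 - Θ 0 * (1 - ν s)^2) hqc
      (by
        intro t ht
        have h := ((hΘ t ht).mul_const ((1 - ν 0)^2)).sub ((hW t ht).const_mul (Θ 0))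
        refine h.congr_deriv (Eq.symm ?_)
        show -2 * q t * (Θ t * (1 - ν 0)^2 - Θ 0 * (1 - ν t)^2) = _
        ring)
      (by ring)
    intro t ht
    have h' : Θ t * (1 - ν 0)^2 - Θ 0 * (1 - ν t)^2 = 0 := h t ht
    linarith
  -- conserved: F t * Θ 0 = F 0 * Θ t
  have key2 : ∀ t ≥ (0:ℝ),
      ((q t)^2 + κ * (ν t)^2 + (Θ t)^2) * Θ 0
        = ((q 0)^2 + κ * (ν 0)^2 + (Θ 0)^2) * Θ t := by
    have h := lin_ode_zero q
      (fun s => ((q s)^2 + κ * (ν s)^2 + (Θ s)^2) * Θ 0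
        - ((q 0)^2 + κ * (ν 0)^2 + (Θ 0)^2) * Θ s) hqc
      (by
        intro t ht
        have h := ((hF t ht).mul_const (Θ 0)).sub
          ((hΘ t ht).const_mul ((q 0)^2 + κ * (ν 0)^2 + (Θ 0)^2))
        refine h.congr_deriv (Eq.symm ?_)
        show -2 * q t * (((q t)^2 + κ * (ν t)^2 + (Θ t)^2) * Θ 0
          - ((q 0)^2 + κ * (ν 0)^2 + (Θ 0)^2) * Θ t) = _
        ring)
      (by ring)
    intro t ht
    have h' : ((q t)^2 + κ * (ν t)^2 + (Θ t)^2) * Θ 0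
        - ((q 0)^2 + κ * (ν 0)^2 + (Θ 0)^2) * Θ t = 0 := h t ht
    linarith
  -- abbreviations
  set u0 : ℝ := 1 - ν 0 with hu0def
  have hu0 : 0 < u0 := by rw [hu0def]; linarith
  set F0 : ℝ := (q 0)^2 + κ * (ν 0)^2 + (Θ 0)^2 with hF0def
  have hΘ0sq : (0:ℝ) < (Θ 0)^2 :=
    lt_of_le_of_ne (sq_nonneg _) (by simpa using (pow_ne_zero 2 hΘ0).symm)
  have hF0 : 0 < F0 := by
    rw [hF0def]
    nlinarith [sq_nonneg (q 0), mul_nonneg hκ.le (sq_nonneg (ν 0))]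
  set D : ℝ := F0^2 / (Θ 0)^2 with hDdef
  set B : ℝ := F0 * u0^2 / (Θ 0)^2 with hBdef
  have hD : 0 ≤ D := by rw [hDdef]; positivity
  have hB : 0 ≤ B := by rw [hBdef]; positivity
  refine ⟨3 + D + 2 * B, ?_⟩
  intro t ht
  have hX : (0:ℝ) ≤ (1 - ν t)^2 := sq_nonneg _
  have e1 := key1 t ht
  have e2 := key2 t ht
  -- Θ t² ≤ F t
  have hTF : (Θ t)^2 ≤ (q t)^2 + κ * (ν t)^2 + (Θ t)^2 := by
    nlinarith [sq_nonneg (q t), mul_nonneg hκ.le (sq_nonneg (ν t))]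
  -- F t * u0² = F0 * X  (cancel Θ 0)
  have e3 : ((q t)^2 + κ * (ν t)^2 + (Θ t)^2) * u0^2 = F0 * (1 - ν t)^2 := by
    refine mul_right_cancel₀ hΘ0 ?_
    calc (((q t)^2 + κ * (ν t)^2 + (Θ t)^2) * u0^2) * Θ 0
        = (((q t)^2 + κ * (ν t)^2 + (Θ t)^2) * Θ 0) * u0^2 := by ring
      _ = (F0 * Θ t) * u0^2 := by rw [e2]
      _ = F0 * (Θ t * u0^2) := by ring
      _ = F0 * (Θ 0 * (1 - ν t)^2) := by rw [e1]
      _ = (F0 * (1 - ν t)^2) * Θ 0 := by ring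
  have hu0sq : (0:ℝ) < u0^2 := by positivity
  -- Θ0² X² ≤ F0 X u0²
  have h2 : (Θ 0)^2 * ((1 - ν t)^2)^2 ≤ F0 * (1 - ν t)^2 * u0^2 := by
    have hA : (Θ 0)^2 * ((1 - ν t)^2)^2 = (Θ t)^2 * u0^2 * u0^2 := by
      linear_combination (Θ 0 * (1 - ν t)^2 + Θ t * u0^2) * e1.symm
    have hBle : (Θ t)^2 * u0^2 * u0^2 ≤ (((q t)^2 + κ * (ν t)^2 + (Θ t)^2) * u0^2) * u0^2 := by
      nlinarith [hTF, hu0sq.le, mul_pos hu0sq hu0sq]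
    rw [hA]
    calc (Θ t)^2 * u0^2 * u0^2 ≤ (((q t)^2 + κ * (ν t)^2 + (Θ t)^2) * u0^2) * u0^2 := hBle
      _ = F0 * (1 - ν t)^2 * u0^2 := by rw [e3]
  -- X bound: Θ0² X ≤ F0 u0²
  have hXB : (Θ 0)^2 * (1 - ν t)^2 ≤ F0 * u0^2 := by
    rcases eq_or_lt_of_le hX with h0 | h0
    · rw [← h0, mul_zero]
      exact (mul_pos hF0 hu0sq).le
    · nlinarith [h2, h0]
  -- q bound : q t² Θ0² ≤ F0²
  have hq2 : (q t)^2 * (Θ 0)^2 ≤ F0^2 := by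
    have h1 : (q t)^2 * u0^2 ≤ F0 * (1 - ν t)^2 := by
      have hnn : 0 ≤ (κ * (ν t)^2 + (Θ t)^2) * u0^2 := by positivity
      nlinarith [e3, hnn]
    nlinarith [mul_le_mul_of_nonneg_right h1 hΘ0sq.le,
      mul_le_mul_of_nonneg_left hXB hF0.le, hu0sq]
  -- Θ bound : Θ t² Θ0² ≤ F0²
  have hT2 : (Θ t)^2 * (Θ 0)^2 ≤ F0^2 := by
    have e1sq : (Θ t)^2 * u0^2 * u0^2 = (Θ 0)^2 * ((1 - ν t)^2)^2 := by
      linear_combination (Θ t * u0^2 + Θ 0 * (1 - ν t)^2) * e1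
    have hsq : ((Θ 0)^2 * (1 - ν t)^2)^2 ≤ (F0 * u0^2)^2 :=
      pow_le_pow_left₀ (by positivity) hXB 2
    nlinarith [hsq, e1sq, mul_pos hu0sq hu0sq, hΘ0sq]
  -- ν bound
  have hn2 : (ν t)^2 * (Θ 0)^2 ≤ 2 * (Θ 0)^2 + 2 * F0 * u0^2 := by
    nlinarith [hXB, mul_nonneg (sq_nonneg (ν t - 2)) hΘ0sq.le]
  -- translate to the divided constants
  have hq2' : (q t)^2 ≤ D := by
    rw [hDdef, le_div_iff₀ hΘ0sq]; exact hq2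
  have hT2' : (Θ t)^2 ≤ D := by
    rw [hDdef, le_div_iff₀ hΘ0sq]; exact hT2
  have hn2' : (ν t)^2 ≤ 2 + 2 * B := by
    have : 2 + 2 * B = (2 * (Θ 0)^2 + 2 * F0 * u0^2) / (Θ 0)^2 := by
      rw [hBdef]; field_simp
    rw [this, le_div_iff₀ hΘ0sq]; exact hn2
  have hM1 : (1:ℝ) ≤ 3 + D + 2 * B := by linarith
  refine ⟨?_, ?_, ?_⟩
  · nlinarith [abs_nonneg (q t), sq_abs (q t)]
  · nlinarith [abs_nonneg (ν t), sq_abs (ν t)]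
  · nlinarith [abs_nonneg (Θ t), sq_abs (Θ t)]
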